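/- Under the hypotheses of the unbounded weak law (conditional means pinched between E̲[X_i] and Ē[X_i], gap ≤ δ, variances ≤ σ²), for any ε > 0 and any positive integers N > (σ² + δ²)/ε³ and N', every P ∈ K satisfies P( ∀ n ∈ [N, N+N'] : μ̲_n − ε < (1/n)Σ_{i=1}^n X_i < μ̄_n + ε ) > 1 − 2ε. -/

import Mathlib

open MeasureTheory

set_option maxHeartbeats 4000000 in
/-- Finitary strong law for (possibly unbounded) variables: under the pinched-conditional-mean
hypotheses with gap `δ` and variances at most `σ²`, for positive integers `N > (σ²+δ²)/ε³`
and `N'`, every `P ∈ K` satisfies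
`P( ∀ n ∈ [N, N+N'], μ̲_n - ε < (1/n) Σ_{i=1}^n X_i < μ̄_n + ε ) > 1 - 2ε`. -/
theorem unbounded_finitary_strong_law {Ω : Type*} [m : MeasurableSpace Ω]
    (K : Set (Measure Ω)) (hK : K.Nonempty) (hKp : ∀ P ∈ K, IsProbabilityMeasure P)
    (X : ℕ → Ω → ℝ) (hmeas : ∀ i, Measurable (X i))
    (hL2 : ∀ P ∈ K, ∀ i, MemLp (X i) 2 P)
    (𝒢 : ℕ → MeasurableSpace Ω)
    (h𝒢 : ∀ i, 𝒢 i = ⨆ j ∈ Finset.Icc 1 i, MeasurableSpace.comap (X j) inferInstance)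
    (σ2 δ : ℝ)
    (hvar : ∀ P ∈ K, ∀ i, 1 ≤ i → ∫ ω, (X i ω - ∫ ω', X i ω' ∂P) ^ 2 ∂P ≤ σ2)
    (hgap : ∀ i, 1 ≤ i →
      (⨆ Q ∈ K, ∫ ω', X i ω' ∂Q) - (⨅ Q ∈ K, ∫ ω', X i ω' ∂Q) ≤ δ)
    (hirr : ∀ P ∈ K, ∀ i, 1 ≤ i →
      ∀ᵐ ω ∂P, (⨅ Q ∈ K, ∫ ω', X i ω' ∂Q) ≤ (P[X i | 𝒢 (i - 1)]) ω ∧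
        (P[X i | 𝒢 (i - 1)]) ω ≤ ⨆ Q ∈ K, ∫ ω', X i ω' ∂Q)
    (ε : ℝ) (hε : 0 < ε)
    (N N' : ℕ) (hN : 0 < N) (hN' : 0 < N') (hNbig : (σ2 + δ ^ 2) / ε ^ 3 < (N : ℝ)) :
    ∀ P ∈ K,
      1 - 2 * ε <
        (P {ω | ∀ n ∈ Finset.Icc N (N + N'),
          (∑ i ∈ Finset.Icc 1 n, ⨅ Q ∈ K, ∫ ω', X i ω' ∂Q) / n - ε <
              (∑ i ∈ Finset.Icc 1 n, X i ω) / n ∧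
            (∑ i ∈ Finset.Icc 1 n, X i ω) / n <
              (∑ i ∈ Finset.Icc 1 n, ⨆ Q ∈ K, ∫ ω', X i ω' ∂Q) / n + ε}).toReal := by
  classical
  intro P hP
  haveI hPP : IsProbabilityMeasure P := hKp P hP
  -- notation
  set lw : ℕ → ℝ := fun i => ⨅ Q ∈ K, ∫ ω', X i ω' ∂Q with hlw
  set up : ℕ → ℝ := fun i => ⨆ Q ∈ K, ∫ ω', X i ω' ∂Q with hup
  set C : ℕ → Ω → ℝ := fun i => P[X i | 𝒢 (i - 1)] with hC
  set D : ℕ → Ω → ℝ := fun i ω => X i ω - C i ω with hD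
  set Y : ℕ → Ω → ℝ := fun n ω => ∑ i ∈ Finset.Icc 1 n, D i ω with hY
  set L : ℕ := N + N' with hL
  have hlw' : ∀ i, (⨅ Q ∈ K, ∫ ω', X i ω' ∂Q) = lw i := fun _ => rfl
  have hup' : ∀ i, (⨆ Q ∈ K, ∫ ω', X i ω' ∂Q) = up i := fun _ => rfl
  have hC' : ∀ i, P[X i | 𝒢 (i - 1)] = C i := fun _ => rfl
  have hCbd : ∀ i, 1 ≤ i → ∀ᵐ ω ∂P, lw i ≤ C i ω ∧ C i ω ≤ up i := by
    intro i h1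
    simp only [hC]
    exact hirr P hP i h1
  -- basic measurability facts
  have hG_le : ∀ k, 𝒢 k ≤ m := by
    intro k
    rw [h𝒢 k]
    exact iSup₂_le fun j _ => (hmeas j).comap_le
  have hG_mono : Monotone 𝒢 := by
    intro a b hab
    rw [h𝒢 a, h𝒢 b]
    exact iSup₂_le fun j hj => le_iSup₂ (f := fun j _ => MeasurableSpace.comap (X j) inferInstance)
      j (Finset.mem_Icc.mpr ⟨(Finset.mem_Icc.mp hj).1, (Finset.mem_Icc.mp hj).2.trans hab⟩)
  have hXmG : ∀ i n, 1 ≤ i → i ≤ n → Measurable[𝒢 n] (X i) := by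
    intro i n h1 h2
    refine measurable_iff_comap_le.2 ?_
    rw [h𝒢 n]
    exact le_iSup₂ (f := fun j _ => MeasurableSpace.comap (X j) inferInstance) i
      (Finset.mem_Icc.mpr ⟨h1, h2⟩)
  have hCmG : ∀ i, Measurable[𝒢 (i - 1)] (C i) := fun i =>
    stronglyMeasurable_condExp.measurable
  have hYmG : ∀ n, Measurable[𝒢 n] (Y n) := by
    intro n
    letI : MeasurableSpace Ω := 𝒢 n
    refine Finset.measurable_sum _ fun i hi => ?_
    have h1 := (Finset.mem_Icc.mp hi).1
    have h2 := (Finset.mem_Icc.mp hi).2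
    exact ((hXmG i n h1 h2).sub ((hCmG i).mono (hG_mono (by omega)) le_rfl))
  -- integrability facts
  have hXL2 : ∀ i, MemLp (X i) 2 P := hL2 P hP
  have hCL2 : ∀ i, 1 ≤ i → MemLp (C i) 2 P := by
    intro i h1
    refine MemLp.of_bound
      (((hCmG i).mono (hG_le _) le_rfl).stronglyMeasurable.aestronglyMeasurable)
      (max |lw i| |up i|) ?_
    filter_upwards [hCbd i h1] with ω hω
    rw [Real.norm_eq_abs, abs_le]
    have h1 : -|lw i| ≤ lw i := neg_abs_le _
    have h2 : |lw i| ≤ max |lw i| |up i| := le_max_left _ _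
    have h3 : up i ≤ |up i| := le_abs_self _
    have h4 : |up i| ≤ max |lw i| |up i| := le_max_right _ _
    exact ⟨by linarith [hω.1], by linarith [hω.2]⟩
  have hDL2 : ∀ i, 1 ≤ i → MemLp (D i) 2 P := fun i h1 => (hXL2 i).sub (hCL2 i h1)
  have hmul : ∀ f g : Ω → ℝ, MemLp f 2 P → MemLp g 2 P →
      Integrable (fun ω => f ω * g ω) P := by
    intro f g hf hg
    rw [← memLp_one_iff_integrable]
    exact MemLp.smul (r := 1) hg hf
  have hYL2 : ∀ n, MemLp (Y n) 2 P := by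
    intro n
    exact memLp_finset_sum _ fun i hi => hDL2 i (Finset.mem_Icc.mp hi).1
  have hYsq_int : ∀ n, Integrable (fun ω => Y n ω ^ 2) P := fun n => (hYL2 n).integrable_sq
  have hYsucc : ∀ n ω, Y (n + 1) ω = Y n ω + D (n + 1) ω := by
    intro n ω
    simp only [hY]
    exact Finset.sum_Icc_succ_top (by omega) _
  -- orthogonality of martingale differences
  have horth : ∀ i, 1 ≤ i → ∀ g : Ω → ℝ, Measurable[𝒢 (i - 1)] g → MemLp g 2 P →
      ∫ ω, g ω * D i ω ∂P = 0 := by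
    intro i h1 g hgm hg2
    have hgX : Integrable (fun ω => g ω * X i ω) P := hmul _ _ hg2 (hXL2 i)
    have hgC : Integrable (fun ω => g ω * C i ω) P := hmul _ _ hg2 (hCL2 i h1)
    have hXi : Integrable (X i) P := (hXL2 i).integrable one_le_two
    have hgX' : Integrable (g * X i) P := hgX
    have hpull : P[g * X i | 𝒢 (i - 1)] =ᵐ[P] g * P[X i | 𝒢 (i - 1)] :=
      condExp_mul_of_stronglyMeasurable_left hgm.stronglyMeasurable hgX' hXi
    have e1 : ∫ ω, g ω * X i ω ∂P = ∫ ω, g ω * C i ω ∂P := by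
      calc ∫ ω, g ω * X i ω ∂P = ∫ ω, (g * X i) ω ∂P := rfl
        _ = ∫ ω, (P[g * X i | 𝒢 (i - 1)]) ω ∂P := (integral_condExp (hG_le (i - 1))).symm
        _ = ∫ ω, (g * P[X i | 𝒢 (i - 1)]) ω ∂P := integral_congr_ae hpull
        _ = ∫ ω, g ω * C i ω ∂P := by simp only [hC]; rfl
    have e2 : (fun ω => g ω * D i ω) = fun ω => g ω * X i ω - g ω * C i ω := by
      funext ω; simp only [hD]; ring
    rw [e2, integral_sub hgX hgC, e1, sub_self]
  -- variance bound on martingale differences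
  have hexp : ∀ f : Ω → ℝ, MemLp f 2 P → ∀ b : ℝ,
      ∫ ω, (f ω - b) ^ 2 ∂P = ∫ ω, f ω ^ 2 ∂P - 2 * b * ∫ ω, f ω ∂P + b ^ 2 := by
    intro f hf b
    have h1 : Integrable (fun ω => f ω ^ 2) P := hf.integrable_sq
    have h2 : Integrable f P := hf.integrable one_le_two
    have e : (fun ω => (f ω - b) ^ 2) = fun ω => f ω ^ 2 - 2 * b * f ω + b ^ 2 := by
      funext ω; ring
    have ha : Integrable (fun ω => f ω ^ 2 - 2 * b * f ω) P := h1.sub (h2.const_mul (2 * b))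
    have hb : Integrable (fun ω => 2 * b * f ω) P := h2.const_mul (2 * b)
    rw [e, integral_add ha (integrable_const _),
        integral_sub h1 hb, integral_const_mul, integral_const]
    simp
  have hexp2 : ∀ f : Ω → ℝ, MemLp f 2 P →
      ∫ ω, (f ω - ∫ ω', f ω' ∂P) ^ 2 ∂P = ∫ ω, f ω ^ 2 ∂P - (∫ ω, f ω ∂P) ^ 2 := by
    intro f hf
    rw [hexp f hf _]; ring
  have hsig : ∀ i, 1 ≤ i → (0 ≤ ∫ ω, D i ω ^ 2 ∂P) ∧ ∫ ω, D i ω ^ 2 ∂P ≤ σ2 := by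
    intro i h1
    have hC2 := hCL2 i h1
    have hXi2 := hXL2 i
    refine ⟨integral_nonneg fun ω => sq_nonneg _, ?_⟩
    have hCX : ∫ ω, C i ω * X i ω ∂P = ∫ ω, C i ω ^ 2 ∂P := by
      have h0 : ∫ ω, C i ω * D i ω ∂P = 0 := horth i h1 (C i) (hCmG i) hC2
      have e2 : (fun ω => C i ω * D i ω) = fun ω => C i ω * X i ω - C i ω ^ 2 := by
        funext ω; simp only [hD]; ring
      rw [e2, integral_sub (hmul _ _ hC2 hXi2) hC2.integrable_sq] at h0
      linarith
    have hDsq : ∫ ω, D i ω ^ 2 ∂P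
        = ∫ ω, X i ω ^ 2 ∂P - ∫ ω, C i ω ^ 2 ∂P := by
      have e : (fun ω => D i ω ^ 2)
          = fun ω => X i ω ^ 2 - (2 * (C i ω * X i ω) - C i ω ^ 2) := by
        funext ω; simp only [hD]; ring
      have ha : Integrable (fun ω => 2 * (C i ω * X i ω)) P := (hmul _ _ hC2 hXi2).const_mul 2
      have hb : Integrable (fun ω => 2 * (C i ω * X i ω) - C i ω ^ 2) P :=
        ha.sub hC2.integrable_sq
      rw [e, integral_sub hXi2.integrable_sq hb,
        integral_sub ha hC2.integrable_sq,
        integral_const_mul, hCX]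
      ring
    have hmean : ∫ ω, C i ω ∂P = ∫ ω, X i ω ∂P := by
      simp only [hC]; exact integral_condExp (hG_le (i - 1))
    have hvarX := hvar P hP i h1
    rw [hexp2 (X i) hXi2] at hvarX
    have hJ : 0 ≤ ∫ ω, C i ω ^ 2 ∂P - (∫ ω, X i ω ∂P) ^ 2 := by
      have h0 : 0 ≤ ∫ ω, (C i ω - ∫ ω', C i ω' ∂P) ^ 2 ∂P :=
        integral_nonneg fun ω => sq_nonneg _
      rw [hexp2 (C i) hC2, hmean] at h0
      exact h0
    linarith
  have hσ2 : 0 ≤ σ2 := le_trans (hsig 1 le_rfl).1 (hsig 1 le_rfl).2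
  -- variance of the martingale
  have hYvar : ∀ n, ∫ ω, Y n ω ^ 2 ∂P ≤ (n : ℝ) * σ2 := by
    intro n
    induction n with
    | zero =>
      have e : (fun ω => Y 0 ω ^ 2) = fun _ => (0 : ℝ) := by
        funext ω; simp [hY]
      rw [e]; simp
    | succ n ih =>
      have hDn : MemLp (D (n + 1)) 2 P := hDL2 _ (by omega)
      have hcross : ∫ ω, Y n ω * D (n + 1) ω ∂P = 0 :=
        horth (n + 1) (by omega) (Y n) (by simpa using hYmG n) (hYL2 n)
      have e : (fun ω => Y (n + 1) ω ^ 2)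
          = fun ω => Y n ω ^ 2 + (2 * (Y n ω * D (n + 1) ω) + D (n + 1) ω ^ 2) := by
        funext ω; rw [hYsucc]; ring
      have ha : Integrable (fun ω => 2 * (Y n ω * D (n + 1) ω)) P :=
        (hmul _ _ (hYL2 n) hDn).const_mul 2
      have hb : Integrable (fun ω => 2 * (Y n ω * D (n + 1) ω) + D (n + 1) ω ^ 2) P :=
        ha.add hDn.integrable_sq
      rw [e, integral_add (hYsq_int n) hb,
        integral_add ha hDn.integrable_sq,
        integral_const_mul, hcross]
      have hs := (hsig (n + 1) (by omega)).2
      push_cast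
      nlinarith [ih, hs]
  -- submartingale step
  have hstep : ∀ M (A : Set Ω), MeasurableSet[𝒢 M] A →
      ∫ ω in A, Y M ω ^ 2 ∂P ≤ ∫ ω in A, Y (M + 1) ω ^ 2 ∂P := by
    intro M A hA
    have hAm : MeasurableSet A := hG_le M A hA
    have hDn : MemLp (D (M + 1)) 2 P := hDL2 _ (by omega)
    have hind : MemLp (A.indicator (Y M)) 2 P := MemLp.indicator hAm (hYL2 M)
    have hindm : Measurable[𝒢 M] (A.indicator (Y M)) := (hYmG M).indicator hA
    have h0 : ∫ ω, A.indicator (Y M) ω * D (M + 1) ω ∂P = 0 :=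
      horth (M + 1) (by omega) _ (by simpa using hindm) hind
    have h2 : ∫ ω in A, Y M ω * D (M + 1) ω ∂P = 0 := by
      rw [← integral_indicator hAm]
      have e : A.indicator (fun ω => Y M ω * D (M + 1) ω)
          = fun ω => A.indicator (Y M) ω * D (M + 1) ω := by
        funext ω
        by_cases h : ω ∈ A
        · simp [Set.indicator_of_mem h]
        · simp [Set.indicator_of_notMem h]
      rw [e]; exact h0
    have hsq0 : IntegrableOn (fun ω => Y M ω ^ 2) A P := (hYsq_int M).integrableOn
    have hcr : IntegrableOn (fun ω => Y M ω * D (M + 1) ω) A P :=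
      (hmul _ _ (hYL2 M) hDn).integrableOn
    have hDsq : IntegrableOn (fun ω => D (M + 1) ω ^ 2) A P :=
      hDn.integrable_sq.integrableOn
    have e2 : (fun ω => Y (M + 1) ω ^ 2)
        = fun ω => Y M ω ^ 2 + (2 * (Y M ω * D (M + 1) ω) + D (M + 1) ω ^ 2) := by
      funext ω; rw [hYsucc]; ring
    have hkey : ∫ ω in A, Y (M + 1) ω ^ 2 ∂P
        = ∫ ω in A, Y M ω ^ 2 ∂P + (2 * ∫ ω in A, Y M ω * D (M + 1) ω ∂P
          + ∫ ω in A, D (M + 1) ω ^ 2 ∂P) := by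
      have ha : IntegrableOn (fun ω => 2 * (Y M ω * D (M + 1) ω)) A P := hcr.const_mul 2
      have hb : IntegrableOn
          (fun ω => 2 * (Y M ω * D (M + 1) ω) + D (M + 1) ω ^ 2) A P := ha.add hDsq
      rw [e2, integral_add hsq0 hb, integral_add ha hDsq, integral_const_mul]
    have hpos : 0 ≤ ∫ ω in A, D (M + 1) ω ^ 2 ∂P :=
      setIntegral_nonneg hAm fun ω _ => sq_nonneg _
    rw [hkey, h2]
    linarith
  -- the first-entry sets
  set E : ℕ → Set Ω := fun n =>
    {ω | (n : ℝ) * ε ≤ |Y n ω|} ∩ ⋂ k ∈ Finset.Icc N (n - 1), {ω | |Y k ω| < (k : ℝ) * ε}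
    with hE
  have hEmG : ∀ n, MeasurableSet[𝒢 n] (E n) := by
    intro n
    letI : MeasurableSpace Ω := 𝒢 n
    refine MeasurableSet.inter (measurableSet_le measurable_const (hYmG n).abs) ?_
    refine Set.Finite.measurableSet_biInter (Finset.finite_toSet _) fun k hk => ?_
    have hkn : k ≤ n := le_trans (Finset.mem_Icc.mp hk).2 (Nat.sub_le _ _)
    exact measurableSet_lt (((hYmG k).mono (hG_mono hkn) le_rfl).abs) measurable_const
  have hEm : ∀ n, MeasurableSet (E n) := fun n => hG_le n _ (hEmG n)
  set T : ℕ → Set Ω := fun M => ⋃ n ∈ Finset.Icc N M, E n with hT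
  have hTmG : ∀ M, N ≤ M → MeasurableSet[𝒢 M] (T M) := by
    intro M _
    refine Set.Finite.measurableSet_biUnion (Finset.finite_toSet _) fun k hk => ?_
    exact (hG_mono (Finset.mem_Icc.mp hk).2) _ (hEmG k)
  have hTm : ∀ M, MeasurableSet (T M) := by
    intro M
    exact Set.Finite.measurableSet_biUnion (Finset.finite_toSet _) fun k _ => hEm k
  -- disjointness of the first-entry sets from earlier ones
  have hdisj : ∀ M, Disjoint (T M) (E (M + 1)) := by
    intro M
    rw [Set.disjoint_left]
    intro ω hωT hωE
    simp only [hT, Set.mem_iUnion, exists_prop] at hωT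
    obtain ⟨n, hn, hωn⟩ := hωT
    simp only [hE, Set.mem_inter_iff, Set.mem_setOf_eq, Set.mem_iInter] at hωn hωE
    have hk : |Y n ω| < (n : ℝ) * ε := by
      refine hωE.2 n ?_
      simp only [Nat.add_sub_cancel]
      exact hn
    exact absurd hωn.1 (not_le.mpr hk)
  -- the Chow/Hájek–Rényi induction
  set c : ℕ → ℝ := fun n => 1 / (n : ℝ) ^ 2 with hc
  set u : ℕ → ℝ := fun M => ∫ ω in T M, Y M ω ^ 2 ∂P with hu
  have hcnonneg : ∀ n : ℕ, 0 ≤ c n := by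
    intro n; simp only [hc]; positivity
  have hchow : ∀ M, N ≤ M →
      ∑ n ∈ Finset.Icc N M, c n * ∫ ω in E n, Y n ω ^ 2 ∂P ≤
        c M * u M + ∑ n ∈ Finset.Ico N M, (c n - c (n + 1)) * u n := by
    intro M hM
    induction M, hM using Nat.le_induction with
    | base =>
      have hTN : T N = E N := by
        simp only [hT]
        rw [Finset.Icc_self, Finset.set_biUnion_singleton]
      simp [Finset.Icc_self, Finset.Ico_self, hu, hTN]
    | succ M hM ih =>
      have hTsucc : T (M + 1) = T M ∪ E (M + 1) := by
        simp only [hT]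
        rw [← Finset.insert_Icc_right_eq_Icc_add_one (by omega), Finset.set_biUnion_insert]
        exact Set.union_comm _ _
      have hu_split : u (M + 1) = (∫ ω in T M, Y (M + 1) ω ^ 2 ∂P)
          + ∫ ω in E (M + 1), Y (M + 1) ω ^ 2 ∂P := by
        simp only [hu]
        rw [hTsucc, setIntegral_union (hdisj M) (hEm (M + 1))
          ((hYsq_int (M + 1)).integrableOn) ((hYsq_int (M + 1)).integrableOn)]
      have hTstep : u M ≤ ∫ ω in T M, Y (M + 1) ω ^ 2 ∂P := hstep M (T M) (hTmG M hM)
      have hEterm : c (M + 1) * ∫ ω in E (M + 1), Y (M + 1) ω ^ 2 ∂P ≤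
          c (M + 1) * u (M + 1) - c (M + 1) * u M := by
        rw [← mul_sub]
        refine mul_le_mul_of_nonneg_left ?_ (hcnonneg (M + 1))
        linarith
      rw [Finset.sum_Icc_succ_top (by omega : N ≤ M + 1), Finset.sum_Ico_succ_top hM]
      have hexpand : (c M - c (M + 1)) * u M = c M * u M - c (M + 1) * u M := by ring
      linarith [ih, hEterm, hexpand]
  -- numeric bounds
  have habel : ∀ M, N ≤ M →
      c M * ((M : ℝ) * σ2) + ∑ n ∈ Finset.Ico N M, (c n - c (n + 1)) * ((n : ℝ) * σ2)
        = σ2 * ((N : ℝ) * c N + ∑ n ∈ Finset.Ico N M, c (n + 1)) := by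
    intro M hM
    induction M, hM using Nat.le_induction with
    | base => simp [Finset.Ico_self]; ring
    | succ M hM ih =>
      rw [Finset.sum_Ico_succ_top hM, Finset.sum_Ico_succ_top hM]
      push_cast
      push_cast at ih
      linear_combination ih
  have hsumsq : ∀ M, N ≤ M → ∑ n ∈ Finset.Ico N M, c (n + 1) ≤ 1 / (N : ℝ) - 1 / (M : ℝ) := by
    intro M hM
    induction M, hM using Nat.le_induction with
    | base => simp [Finset.Ico_self]
    | succ M hM ih =>
      have hM0 : (0 : ℝ) < M := by exact_mod_cast lt_of_lt_of_le hN hM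
      have h1 : c (M + 1) ≤ 1 / (M : ℝ) - 1 / ((M : ℝ) + 1) := by
        simp only [hc]
        push_cast
        rw [div_sub_div _ _ (ne_of_gt hM0) (by positivity),
          div_le_div_iff₀ (by positivity) (by positivity)]
        nlinarith [hM0]
      rw [Finset.sum_Ico_succ_top hM]
      push_cast
      linarith [ih, h1]
  -- putting the maximal inequality together
  have hNL : N ≤ L := by omega
  have hN0 : (0 : ℝ) < N := by exact_mod_cast hN
  have hL0 : (0 : ℝ) < L := by
    have : 0 < L := by omega
    exact_mod_cast this
  have hmax : ∑ n ∈ Finset.Icc N L, (P (E n)).toReal < 2 * ε := by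
    have key : ∀ n ∈ Finset.Icc N L,
        ε ^ 2 * (P (E n)).toReal ≤ c n * ∫ ω in E n, Y n ω ^ 2 ∂P := by
      intro n hn
      have hn1 : 1 ≤ n := le_trans hN (Finset.mem_Icc.mp hn).1
      have hn0 : (0 : ℝ) < n := by exact_mod_cast hn1
      have hconst : ((n : ℝ) * ε) ^ 2 * (P (E n)).toReal ≤ ∫ ω in E n, Y n ω ^ 2 ∂P := by
        refine setIntegral_ge_of_const_le_real (hEm n) (measure_ne_top _ _) ?_
          ((hYsq_int n).integrableOn)
        intro ω hω
        have h1 : (n : ℝ) * ε ≤ |Y n ω| := by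
          simp only [hE, Set.mem_inter_iff, Set.mem_setOf_eq] at hω
          exact hω.1
        calc ((n : ℝ) * ε) ^ 2 ≤ |Y n ω| ^ 2 := by
              apply pow_le_pow_left₀ (by positivity) h1
          _ = Y n ω ^ 2 := sq_abs _
      have hmono := mul_le_mul_of_nonneg_left hconst
        (le_of_lt (show (0 : ℝ) < 1 / (n : ℝ) ^ 2 by positivity))
      calc ε ^ 2 * (P (E n)).toReal
          = 1 / (n : ℝ) ^ 2 * (((n : ℝ) * ε) ^ 2 * (P (E n)).toReal) := by
            field_simp
        _ ≤ 1 / (n : ℝ) ^ 2 * ∫ ω in E n, Y n ω ^ 2 ∂P := hmono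
        _ = c n * ∫ ω in E n, Y n ω ^ 2 ∂P := by rw [hc]
    have hut : ∀ n, u n ≤ (n : ℝ) * σ2 := by
      intro n
      refine le_trans ?_ (hYvar n)
      exact setIntegral_le_integral (hYsq_int n) (Filter.Eventually.of_forall fun ω => sq_nonneg _)
    have hcdec : ∀ n : ℕ, 1 ≤ n → c (n + 1) ≤ c n := by
      intro n h1
      have h0 : (0 : ℝ) < n := by exact_mod_cast h1
      simp only [hc]
      rw [div_le_div_iff₀ (by positivity) (by positivity)]
      push_cast
      nlinarith [h0]
    have hchain : ε ^ 2 * ∑ n ∈ Finset.Icc N L, (P (E n)).toReal ≤ 2 * σ2 / (N : ℝ) := by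
      rw [Finset.mul_sum]
      calc ∑ n ∈ Finset.Icc N L, ε ^ 2 * (P (E n)).toReal
          ≤ ∑ n ∈ Finset.Icc N L, c n * ∫ ω in E n, Y n ω ^ 2 ∂P :=
            Finset.sum_le_sum key
        _ ≤ c L * u L + ∑ n ∈ Finset.Ico N L, (c n - c (n + 1)) * u n := hchow L hNL
        _ ≤ c L * ((L : ℝ) * σ2) + ∑ n ∈ Finset.Ico N L, (c n - c (n + 1)) * ((n : ℝ) * σ2) := by
            refine add_le_add (mul_le_mul_of_nonneg_left (hut L) (hcnonneg L)) ?_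
            refine Finset.sum_le_sum fun n hn => ?_
            have hn1 : 1 ≤ n := le_trans hN (Finset.mem_Ico.mp hn).1
            exact mul_le_mul_of_nonneg_left (hut n) (by linarith [hcdec n hn1])
        _ = σ2 * ((N : ℝ) * c N + ∑ n ∈ Finset.Ico N L, c (n + 1)) := habel L hNL
        _ ≤ σ2 * (1 / (N : ℝ) + (1 / (N : ℝ) - 1 / (L : ℝ))) := by
            refine mul_le_mul_of_nonneg_left ?_ hσ2
            refine add_le_add ?_ (hsumsq L hNL)
            have : (N : ℝ) * c N = 1 / (N : ℝ) := by
              simp only [hc]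
              field_simp
            linarith [this]
        _ ≤ 2 * σ2 / (N : ℝ) := by
            have h1L : 0 < 1 / (L : ℝ) := by positivity
            calc σ2 * (1 / (N : ℝ) + (1 / (N : ℝ) - 1 / (L : ℝ)))
                ≤ σ2 * (2 * (1 / (N : ℝ))) := by
                  exact mul_le_mul_of_nonneg_left (by linarith) hσ2
              _ = 2 * σ2 / (N : ℝ) := by ring
    have hσN : 2 * σ2 / (N : ℝ) < 2 * ε ^ 3 := by
      have hbig : σ2 + δ ^ 2 < (N : ℝ) * ε ^ 3 := by
        rw [div_lt_iff₀ (by positivity)] at hNbig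
        linarith [hNbig]
      have hδ : 0 ≤ δ ^ 2 := sq_nonneg δ
      rw [div_lt_iff₀ hN0]
      nlinarith
    have hfin : ε ^ 2 * ∑ n ∈ Finset.Icc N L, (P (E n)).toReal < ε ^ 2 * (2 * ε) := by
      calc ε ^ 2 * ∑ n ∈ Finset.Icc N L, (P (E n)).toReal ≤ 2 * σ2 / (N : ℝ) := hchain
        _ < 2 * ε ^ 3 := hσN
        _ = ε ^ 2 * (2 * ε) := by ring
    exact lt_of_mul_lt_mul_left hfin (by positivity)
  -- entry of the bad event into the first-entry sets
  have hTsub : {ω | ∃ n, n ∈ Finset.Icc N L ∧ (n : ℝ) * ε ≤ |Y n ω|} ⊆ T L := by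
    intro ω hω
    obtain ⟨n, hn, hge⟩ := hω
    have hex : ∃ k, k ∈ Finset.Icc N L ∧ (k : ℝ) * ε ≤ |Y k ω| := ⟨n, hn, hge⟩
    have hk0 := Nat.find_spec hex
    have hk0N : N ≤ Nat.find hex := (Finset.mem_Icc.mp hk0.1).1
    refine Set.mem_biUnion hk0.1 ?_
    simp only [hE, Set.mem_inter_iff, Set.mem_setOf_eq, Set.mem_iInter]
    refine ⟨hk0.2, fun k hkIcc => ?_⟩
    by_contra hcon
    push_neg at hcon
    have hkmem : k ∈ Finset.Icc N L := by
      have h1 := (Finset.mem_Icc.mp hkIcc).1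
      have h2 := (Finset.mem_Icc.mp hkIcc).2
      have h3 := (Finset.mem_Icc.mp hk0.1).2
      exact Finset.mem_Icc.mpr ⟨h1, by omega⟩
    have hlt : k < Nat.find hex := by
      have h2 := (Finset.mem_Icc.mp hkIcc).2
      omega
    exact Nat.find_min hex hlt ⟨hkmem, hcon⟩
  -- final assembly
  set G : Set Ω := {ω | ∀ n ∈ Finset.Icc N L,
      (∑ i ∈ Finset.Icc 1 n, lw i) / (n : ℝ) - ε < (∑ i ∈ Finset.Icc 1 n, X i ω) / (n : ℝ) ∧
      (∑ i ∈ Finset.Icc 1 n, X i ω) / (n : ℝ) <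
        (∑ i ∈ Finset.Icc 1 n, up i) / (n : ℝ) + ε} with hG
  have hGm : MeasurableSet G := by
    have hGeq : G = ⋂ n ∈ Finset.Icc N L,
        ({ω | (∑ i ∈ Finset.Icc 1 n, lw i) / (n : ℝ) - ε
            < (∑ i ∈ Finset.Icc 1 n, X i ω) / (n : ℝ)}
          ∩ {ω | (∑ i ∈ Finset.Icc 1 n, X i ω) / (n : ℝ)
            < (∑ i ∈ Finset.Icc 1 n, up i) / (n : ℝ) + ε}) := by
      rw [hG]; ext ω
      simp only [Set.mem_setOf_eq, Set.mem_iInter, Set.mem_inter_iff]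
    rw [hGeq]
    refine Finset.measurableSet_biInter _ fun n hn => ?_
    have hsm : Measurable fun ω => (∑ i ∈ Finset.Icc 1 n, X i ω) / (n : ℝ) :=
      (Finset.measurable_sum _ fun i _ => hmeas i).div_const _
    exact (measurableSet_lt measurable_const hsm).inter (measurableSet_lt hsm measurable_const)
  have hae : ∀ᵐ ω ∂P, ∀ i ∈ Finset.Icc 1 L, lw i ≤ C i ω ∧ C i ω ≤ up i := by
    rw [Filter.eventually_all_finset]
    intro i hi
    exact hCbd i (Finset.mem_Icc.mp hi).1
  have hsub : Gᶜ ≤ᵐ[P] T L := by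
    filter_upwards [hae] with ω hω
    intro hωc
    by_contra hωT
    apply hωc
    show ω ∈ G
    simp only [hG, Set.mem_setOf_eq]
    intro n hn
    have hYlt : |Y n ω| < (n : ℝ) * ε := by
      by_contra hge
      push_neg at hge
      exact hωT (hTsub ⟨n, hn, hge⟩)
    have hn1 : 1 ≤ n := le_trans hN (Finset.mem_Icc.mp hn).1
    have hnL : n ≤ L := (Finset.mem_Icc.mp hn).2
    have hn0 : (0 : ℝ) < n := by exact_mod_cast hn1
    have hsplit : ∑ i ∈ Finset.Icc 1 n, X i ω = Y n ω + ∑ i ∈ Finset.Icc 1 n, C i ω := by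
      simp only [hY, hD]
      rw [← Finset.sum_add_distrib]
      exact Finset.sum_congr rfl fun i _ => by ring
    have hmemL : ∀ i ∈ Finset.Icc 1 n, i ∈ Finset.Icc 1 L := fun i hi =>
      Finset.mem_Icc.mpr ⟨(Finset.mem_Icc.mp hi).1, le_trans (Finset.mem_Icc.mp hi).2 hnL⟩
    have hlo : ∑ i ∈ Finset.Icc 1 n, lw i ≤ ∑ i ∈ Finset.Icc 1 n, C i ω :=
      Finset.sum_le_sum fun i hi => (hω i (hmemL i hi)).1
    have hhi : ∑ i ∈ Finset.Icc 1 n, C i ω ≤ ∑ i ∈ Finset.Icc 1 n, up i :=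
      Finset.sum_le_sum fun i hi => (hω i (hmemL i hi)).2
    have habs := abs_lt.mp hYlt
    have hd1 : (∑ i ∈ Finset.Icc 1 n, lw i) / (n : ℝ)
        ≤ (∑ i ∈ Finset.Icc 1 n, C i ω) / (n : ℝ) := div_le_div_of_nonneg_right hlo (le_of_lt hn0)
    have hd4 : (∑ i ∈ Finset.Icc 1 n, C i ω) / (n : ℝ)
        ≤ (∑ i ∈ Finset.Icc 1 n, up i) / (n : ℝ) := div_le_div_of_nonneg_right hhi (le_of_lt hn0)
    have hd2 : -ε < Y n ω / (n : ℝ) := by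
      rw [lt_div_iff₀ hn0]
      nlinarith [habs.1]
    have hd3 : Y n ω / (n : ℝ) < ε := by
      rw [div_lt_iff₀ hn0]
      nlinarith [habs.2]
    constructor
    · rw [hsplit, add_div]
      linarith
    · rw [hsplit, add_div]
      linarith
  have hcompl : P Gᶜ ≤ ∑ n ∈ Finset.Icc N L, P (E n) := by
    refine le_trans (measure_mono_ae hsub) ?_
    simp only [hT]
    exact measure_biUnion_finset_le _ _
  have hfin : (P Gᶜ).toReal ≤ ∑ n ∈ Finset.Icc N L, (P (E n)).toReal := by
    calc (P Gᶜ).toReal ≤ (∑ n ∈ Finset.Icc N L, P (E n)).toReal :=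
          ENNReal.toReal_mono (ENNReal.sum_lt_top.mpr fun n _ => measure_lt_top _ _).ne hcompl
      _ = ∑ n ∈ Finset.Icc N L, (P (E n)).toReal :=
          ENNReal.toReal_sum fun n _ => measure_ne_top _ _
  have hsplitP : (P G).toReal + (P Gᶜ).toReal = 1 := by
    rw [← ENNReal.toReal_add (measure_ne_top _ _) (measure_ne_top _ _),
      measure_add_measure_compl hGm]
    simp
  show 1 - 2 * ε < (P G).toReal
  linarith
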